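/- arXiv:2404.16751 — 2 statements merged into one kernel-verified Lean document; each statement's English description precedes it below -/
import Mathlib

section
/- For any integer partition λ of N whose part sizes below the first row sum to at most k (i.e. |λ*| ≤ k where λ* removes the first row), the dimension of the corresponding irreducible representation of the symmetric group S_N, given by the hook length formula N!/∏_{(i,j)∈λ} h(i,j), is a polynomial function of N of degree |λ*| with all roots at integers in {0, 1, …, 2k−1} of multiplicity at most one, when λ* is held fixed and the first row absorbs the remaining N − |λ*| boxes. -/
/-- The partition `λ(N) = (N − m, μ)`: first row absorbs the remaining `N − m` boxes,
the rows below are given by `μ`. -/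
def lamRow (μ : ℕ → ℕ) (m N : ℕ) : ℕ → ℕ :=
  fun i => if i = 0 then N - m else μ (i - 1)

/-- Column lengths (conjugate partition) of `λ(N)`, rows supported in `{0,…,r}`. -/
def lamCol (μ : ℕ → ℕ) (m N r : ℕ) : ℕ → ℕ :=
  fun j => ((Finset.range (r + 1)).filter (fun i => j < lamRow μ m N i)).card

/-- Hook length of the cell `(i,j)` of `λ(N)`:
`h(i,j) = λᵢ − j + λ'ⱼ − i − 1`. -/
def hookLen (μ : ℕ → ℕ) (m N r i j : ℕ) : ℕ :=
  lamRow μ m N i + lamCol μ m N r j - (i + j + 1)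

/-- The product of all hook lengths of `λ(N)`. -/
def hookProd (μ : ℕ → ℕ) (m N r : ℕ) : ℕ :=
  ∏ i ∈ Finset.range (r + 1), ∏ j ∈ Finset.range (lamRow μ m N i), hookLen μ m N r i j

namespace HookAux

def conj (μ : ℕ → ℕ) (r j : ℕ) : ℕ := ((Finset.range r).filter (fun i => j < μ i)).card

def Hmu (μ : ℕ → ℕ) (r : ℕ) : ℕ :=
  ∏ i ∈ Finset.range r, ∏ j ∈ Finset.range (μ i), (μ i + conj μ r j - (i + j + 1))

theorem conj_anti (μ : ℕ → ℕ) (r : ℕ) : Antitone (conj μ r) := by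
  intro j1 j2 h
  apply Finset.card_le_card
  intro i hi
  simp only [Finset.mem_filter] at hi ⊢
  exact ⟨hi.1, by omega⟩

theorem conj_le (μ : ℕ → ℕ) (r m : ℕ) (hm : ∑ i ∈ Finset.range r, μ i = m) (j : ℕ) :
    conj μ r j ≤ m := by
  classical
  calc conj μ r j = ∑ i ∈ (Finset.range r).filter (fun i => j < μ i), 1 :=
        (Finset.card_eq_sum_ones _)
    _ ≤ ∑ i ∈ (Finset.range r).filter (fun i => j < μ i), μ i := by
        apply Finset.sum_le_sum; intro i hi
        simp only [Finset.mem_filter] at hi; omega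
    _ ≤ ∑ i ∈ Finset.range r, μ i :=
        Finset.sum_le_sum_of_subset (Finset.filter_subset _ _)
    _ = m := hm

theorem conj_ge (μ : ℕ → ℕ) (hμ : Antitone μ) (r i j : ℕ) (hi : i < r) (hj : j < μ i) :
    i + 1 ≤ conj μ r j := by
  have : Finset.range (i + 1) ⊆ (Finset.range r).filter (fun i => j < μ i) := by
    intro i' hi'
    simp only [Finset.mem_range] at hi'
    simp only [Finset.mem_filter, Finset.mem_range]
    refine ⟨by omega, lt_of_lt_of_le hj (hμ (by omega))⟩
  simpa [conj] using Finset.card_le_card this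

theorem mu0_le (μ : ℕ → ℕ) (r m : ℕ) (hr : ∀ i, r ≤ i → μ i = 0)
    (hm : ∑ i ∈ Finset.range r, μ i = m) : μ 0 ≤ m := by
  rcases Nat.eq_zero_or_pos r with h | h
  · rw [hr 0 (by omega)]; omega
  · calc μ 0 ≤ ∑ i ∈ Finset.range r, μ i :=
        Finset.single_le_sum (fun i _ => Nat.zero_le _) (Finset.mem_range.2 h)
      _ = m := hm

theorem Hmu_pos (μ : ℕ → ℕ) (hμ : Antitone μ) (r : ℕ) : 0 < Hmu μ r := by
  apply Finset.prod_pos; intro i hi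
  apply Finset.prod_pos; intro j hj
  simp only [Finset.mem_range] at hi hj
  have h1 := conj_ge μ hμ r i j hi hj
  omega

theorem lamCol_eq (μ : ℕ → ℕ) (m N r j : ℕ) (hj : j < N - m) :
    lamCol μ m N r j = conj μ r j + 1 := by
  classical
  rw [lamCol, conj, Finset.card_filter, Finset.card_filter, Finset.sum_range_succ']
  simp only [lamRow]
  simp [hj]

theorem prod_sub_eq_factorial (n : ℕ) : (∏ i ∈ Finset.range n, (n - i)) = n.factorial := by
  rw [← Finset.prod_range_add_one_eq_factorial n, ← Finset.prod_range_reflect (fun j => j + 1) n]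
  apply Finset.prod_congr rfl
  intro i hi
  simp only [Finset.mem_range] at hi
  omega

theorem hookProd_eq (μ : ℕ → ℕ) (hμ : Antitone μ) (r m : ℕ)
    (hr : ∀ i, r ≤ i → μ i = 0) (hm : ∑ i ∈ Finset.range r, μ i = m)
    (N : ℕ) (hN : 2 * m ≤ N) :
    hookProd μ m N r =
      Hmu μ r * (N - m - μ 0).factorial *
        ∏ j ∈ Finset.range (μ 0), (N - (m + j - conj μ r j)) := by
  have hμ0 : μ 0 ≤ m := mu0_le μ r m hr hm
  have hsplit : N - m = μ 0 + (N - m - μ 0) := by omega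
  rw [hookProd, Finset.prod_range_succ']
  have hrow0 : (∏ j ∈ Finset.range (lamRow μ m N 0), hookLen μ m N r 0 j) =
      (∏ j ∈ Finset.range (μ 0), (N - (m + j - conj μ r j))) * (N - m - μ 0).factorial := by
    have hl0 : lamRow μ m N 0 = N - m := by simp [lamRow]
    conv_lhs => rw [hl0, hsplit]
    rw [Finset.prod_range_add]
    congr 1
    · apply Finset.prod_congr rfl
      intro j hj
      simp only [Finset.mem_range] at hj
      have hjN : j < N - m := by omega
      have hc1 : 1 ≤ conj μ r j := by
        have hr0 : 0 < r := by
          by_contra h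
          have := hr 0 (by omega); omega
        exact conj_ge μ hμ r 0 j hr0 hj
      have hcm : conj μ r j ≤ m := conj_le μ r m hm j
      rw [hookLen, lamCol_eq μ m N r j hjN, hl0]
      omega
    · rw [← prod_sub_eq_factorial (N - m - μ 0)]
      apply Finset.prod_congr rfl
      intro i hi
      simp only [Finset.mem_range] at hi
      have hjN : μ 0 + i < N - m := by omega
      have hc0 : conj μ r (μ 0 + i) = 0 := by
        rw [conj, Finset.card_eq_zero, Finset.filter_eq_empty_iff]
        intro i' _
        have := hμ (Nat.zero_le i')
        omega
      rw [hookLen, lamCol_eq μ m N r _ hjN, hc0, hl0]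
      omega
  rw [hrow0]
  have hrows : (∏ i ∈ Finset.range r, ∏ j ∈ Finset.range (lamRow μ m N (i + 1)),
      hookLen μ m N r (i + 1) j) = Hmu μ r := by
    apply Finset.prod_congr rfl
    intro i hi
    simp only [Finset.mem_range] at hi
    have hli : lamRow μ m N (i + 1) = μ i := by simp [lamRow]
    rw [hli]
    apply Finset.prod_congr rfl
    intro j hj
    simp only [Finset.mem_range] at hj
    have hjm : j < μ 0 := lt_of_lt_of_le hj (hμ (Nat.zero_le i))
    have hjN : j < N - m := by omega
    rw [hookLen, lamCol_eq μ m N r j hjN, hli]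
    omega
  rw [hrows]
  ring

end HookAux

open HookAux Polynomial

/-- Hook length formula polynomiality: fix a partition `μ ⊢ m` with `m ≤ k` and let
`λ(N) = (N − m, μ)`. Then `N ↦ dim S_{λ(N)} = N! / ∏_{(i,j)∈λ(N)} h(i,j)` agrees, for all
`N ≥ 2k`, with a polynomial in `N` of degree `m` whose roots are simple and are integers
in `{0, 1, …, 2k − 1}`. -/
theorem hook_dimension_polynomial (μ : ℕ → ℕ) (hμ : Antitone μ) (r m k : ℕ)
    (hr : ∀ i, r ≤ i → μ i = 0) (hm : ∑ i ∈ Finset.range r, μ i = m)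
    (hmk : m ≤ k) (hk : 0 < k) :
    ∃ P : Polynomial ℝ, P.natDegree = m ∧
      (∀ N : ℕ, 2 * k ≤ N →
        (N.factorial : ℝ) / (hookProd μ m N r : ℝ) = P.eval (N : ℝ)) ∧
      (∀ x ∈ P.roots, ∃ j : ℕ, j < 2 * k ∧ x = (j : ℝ)) ∧
      P.roots.Nodup := by
  classical
  set c : ℕ → ℕ := conj μ r with hc
  set f : ℕ → ℕ := fun j => m + j - c j with hf
  have hμ0 : μ 0 ≤ m := mu0_le μ r m hr hm
  have hcm : ∀ j, c j ≤ m := conj_le μ r m hm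
  have hfmono : StrictMono f := by
    apply strictMono_nat_of_lt_succ
    intro j
    have h1 : c (j + 1) ≤ c j := conj_anti μ r (by omega)
    have h2 := hcm j
    simp only [hf]
    omega
  set A : Finset ℕ := (Finset.range (μ 0)).image f with hA
  have hAsub : A ⊆ Finset.range (m + μ 0) := by
    intro t ht
    simp only [hA, Finset.mem_image, Finset.mem_range] at ht ⊢
    obtain ⟨j, hj, rfl⟩ := ht
    have hr0 : 0 < r := by
      by_contra h
      have := hr 0 (by omega); omega
    have h1 : 1 ≤ c j := conj_ge μ hμ r 0 j hr0 hj
    simp only [hf]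
    omega
  have hAcard : A.card = μ 0 := by
    rw [hA, Finset.card_image_of_injective _ hfmono.injective, Finset.card_range]
  set T : Finset ℕ := Finset.range (m + μ 0) \ A with hT
  have hTcard : T.card = m := by
    rw [hT, Finset.card_sdiff_of_subset hAsub, Finset.card_range, hAcard]
    omega
  set S : Finset ℝ := T.image (Nat.cast) with hS
  have hScard : S.card = m := by
    rw [hS, Finset.card_image_of_injective _ Nat.cast_injective, hTcard]
  have hH : (0:ℝ) < (Hmu μ r : ℝ) := by
    exact_mod_cast Hmu_pos μ hμ r
  have hHne : ((Hmu μ r : ℝ))⁻¹ ≠ 0 := inv_ne_zero (ne_of_gt hH)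
  refine ⟨C ((Hmu μ r : ℝ))⁻¹ * ∏ x ∈ S, (X - C x), ?_, ?_, ?_, ?_⟩
  · rw [natDegree_C_mul hHne, natDegree_prod _ _ (fun x _ => X_sub_C_ne_zero x)]
    simp [natDegree_X_sub_C, hScard]
  · intro N hN
    have hNm : 2 * m ≤ N := by omega
    have hkey : N.factorial * Hmu μ r = hookProd μ m N r * ∏ t ∈ T, (N - t) := by
      have h1 : N.factorial = (N - (m + μ 0)).factorial * N.descFactorial (m + μ 0) :=
        (Nat.factorial_mul_descFactorial (by omega)).symm
      rw [h1, Nat.descFactorial_eq_prod_range, ← Finset.prod_sdiff hAsub, ← hT,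
        hookProd_eq μ hμ r m hr hm N hNm]
      have h2 : (∏ t ∈ A, (N - t)) = ∏ j ∈ Finset.range (μ 0), (N - (m + j - c j)) := by
        rw [hA, Finset.prod_image]
        intro a _ b _ hab
        exact hfmono.injective hab
      have h3 : N - (m + μ 0) = N - m - μ 0 := by omega
      rw [h2, h3]
      ring
    have hprodA : ∀ j ∈ Finset.range (μ 0), 0 < N - (m + j - c j) := by
      intro j hj
      simp only [Finset.mem_range] at hj
      have := hcm j
      omega
    have hhp : (0:ℝ) < (hookProd μ m N r : ℝ) := by
      have : 0 < hookProd μ m N r := by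
        rw [hookProd_eq μ hμ r m hr hm N hNm]
        exact Nat.mul_pos (Nat.mul_pos (Hmu_pos μ hμ r) (Nat.factorial_pos _))
          (Finset.prod_pos hprodA)
      exact_mod_cast this
    have hTN : ∀ t ∈ T, t ≤ N := by
      intro t ht
      have := hAsub
      have htr : t ∈ Finset.range (m + μ 0) := (Finset.sdiff_subset) ht
      simp only [Finset.mem_range] at htr
      omega
    have hev : eval (N:ℝ) (C ((Hmu μ r : ℝ))⁻¹ * ∏ x ∈ S, (X - C x)) =
        ((Hmu μ r : ℝ))⁻¹ * ((∏ t ∈ T, (N - t) : ℕ) : ℝ) := by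
      rw [eval_mul, eval_C, eval_prod]
      congr 1
      rw [hS, Finset.prod_image (fun a _ b _ hab => Nat.cast_injective hab)]
      rw [Nat.cast_prod]
      apply Finset.prod_congr rfl
      intro t ht
      simp [Nat.cast_sub (hTN t ht)]
    have h4 : (N.factorial : ℝ) * (Hmu μ r : ℝ) =
        (hookProd μ m N r : ℝ) * ((∏ t ∈ T, (N - t) : ℕ) : ℝ) := by
      exact_mod_cast hkey
    push_cast at h4
    rw [hev]
    field_simp
    push_cast
    linear_combination h4
  · intro x hx
    rw [roots_C_mul _ hHne, roots_prod_X_sub_C] at hx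
    rw [← Finset.mem_def] at hx
    simp only [hS, Finset.mem_image] at hx
    obtain ⟨t, ht, rfl⟩ := hx
    have htr : t ∈ Finset.range (m + μ 0) := (Finset.sdiff_subset) ht
    simp only [Finset.mem_range] at htr
    exact ⟨t, by omega, rfl⟩
  · rw [roots_C_mul _ hHne, roots_prod_X_sub_C]
    exact S.nodup
end

section
/- Let p_m be the Kesten–McKay density p_m(x) = √(4(m−1)/m − x²) / (2π(1 − x²/m)) on |x| ≤ 2√(1 − 1/m) (and 0 elsewhere), for an integer m ≥ 2. Then p_m is a probability density: it is nonnegative on its support and integrates to 1. -/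
/-- The Kesten–McKay density with parameter `m`:
`p_m(x) = √(4(m−1)/m − x²) / (2π(1 − x²/m))` for `|x| ≤ 2√(1 − 1/m)`, `0` elsewhere. -/
noncomputable def kestenMcKay (m : ℕ) (x : ℝ) : ℝ :=
  if |x| ≤ 2 * Real.sqrt (1 - 1 / m) then
    Real.sqrt (4 * ((m:ℝ) - 1) / m - x ^ 2) / (2 * Real.pi * (1 - x ^ 2 / m))
  else 0

open Real MeasureTheory Set intervalIntegral

/-- auxiliary: the Kesten–McKay density as a function of a real parameter. -/
noncomputable def kmF (M x : ℝ) : ℝ :=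
  Real.sqrt (4 * (M - 1) / M - x ^ 2) / (2 * Real.pi * (1 - x ^ 2 / M))

/-- auxiliary: an antiderivative of `kmF M`. -/
noncomputable def kmG (M x : ℝ) : ℝ :=
  M / (2 * Real.pi) * Real.arcsin (x / (2 * Real.sqrt (1 - 1 / M)))
  - (M - 2) / (2 * Real.pi) *
      Real.arcsin ((M - 2) * x / (2 * Real.sqrt (M - 1) * Real.sqrt (M - x ^ 2)))

lemma kmA_pos {M : ℝ} (hM : 2 ≤ M) : 0 < 2 * Real.sqrt (1 - 1 / M) := by
  have hM0 : (0:ℝ) < M := by linarith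
  have h : (0:ℝ) < 1 - 1 / M := by
    rw [sub_pos, div_lt_one hM0]; linarith
  positivity

lemma kmA_sq {M : ℝ} (hM : 2 ≤ M) : (2 * Real.sqrt (1 - 1 / M)) ^ 2 = 4 * (M - 1) / M := by
  have hM0 : (0:ℝ) < M := by linarith
  have h : (0:ℝ) ≤ 1 - 1 / M := by
    rw [sub_nonneg, div_le_one hM0]; linarith
  rw [mul_pow, Real.sq_sqrt h]
  field_simp
  ring_nf

lemma kmA_sq_le {M : ℝ} (hM : 2 ≤ M) : (2 * Real.sqrt (1 - 1 / M)) ^ 2 ≤ M := by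
  rw [kmA_sq hM]
  have hM0 : (0:ℝ) < M := by linarith
  rw [div_le_iff₀ hM0]
  nlinarith [sq_nonneg (M - 2)]

lemma kmG_hasDeriv {M : ℝ} (hM : 2 ≤ M) {x : ℝ}
    (hx : x ∈ Set.Ioo (-(2 * Real.sqrt (1 - 1 / M))) (2 * Real.sqrt (1 - 1 / M))) :
    HasDerivAt (kmG M) (kmF M x) x := by
  have hM0 : (0:ℝ) < M := by linarith
  set a := 2 * Real.sqrt (1 - 1 / M) with ha_def
  have ha : 0 < a := kmA_pos hM
  have ha2 : a ^ 2 = 4 * (M - 1) / M := kmA_sq hM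
  have ha2' : a ^ 2 * M = 4 * (M - 1) := by
    rw [ha2]; field_simp
  have haM : a ^ 2 ≤ M := by rw [ha_def]; exact kmA_sq_le hM
  have hxa : x ^ 2 < a ^ 2 := sq_lt_sq' hx.1 hx.2
  have ht : 0 < 4 * (M - 1) / M - x ^ 2 := by rw [← ha2]; linarith
  have ht' : x ^ 2 * M < 4 * (M - 1) := (lt_div_iff₀ hM0).mp (by linarith)
  have hMx : 0 < M - x ^ 2 := by linarith
  set c := Real.sqrt (M - 1) with hc_def
  have hc2 : c ^ 2 = M - 1 := Real.sq_sqrt (by linarith)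
  have hc0 : 0 < c := Real.sqrt_pos.mpr (by linarith)
  set w := Real.sqrt (M - x ^ 2) with hw_def
  have hw2 : w ^ 2 = M - x ^ 2 := Real.sq_sqrt hMx.le
  have hw0 : 0 < w := Real.sqrt_pos.mpr hMx
  set s := Real.sqrt (4 * (M - 1) / M - x ^ 2) with hs_def
  have hs2 : s ^ 2 = 4 * (M - 1) / M - x ^ 2 := Real.sq_sqrt ht.le
  have hs2' : s ^ 2 * M = 4 * (M - 1) - x ^ 2 * M := by
    rw [hs2]; field_simp
  have hs0 : 0 < s := Real.sqrt_pos.mpr ht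
  have hpi := Real.pi_pos
  -- first arcsin term
  have hxa1 : |x / a| < 1 := by
    rw [abs_div, abs_of_pos ha, div_lt_one ha]
    exact abs_lt.mpr hx
  have h₁ : x / a ≠ -1 := by intro h; rw [h] at hxa1; norm_num at hxa1
  have h₂ : x / a ≠ 1 := by intro h; rw [h] at hxa1; norm_num at hxa1
  have Hin1 : HasDerivAt (fun y : ℝ => y / a) (1 / a) x := by
    simpa using (hasDerivAt_id x).div_const a
  have H1 : HasDerivAt (fun y : ℝ => Real.arcsin (y / a))
      (1 / Real.sqrt (1 - (x / a) ^ 2) * (1 / a)) x :=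
    by have := (Real.hasDerivAt_arcsin h₁ h₂).comp x Hin1; exact this
  -- second arcsin term
  have Hq : HasDerivAt (fun y : ℝ => M - y ^ 2) (-(2 * x)) x := by
    simpa using ((hasDerivAt_pow 2 x).const_sub M)
  have Hw : HasDerivAt (fun y : ℝ => Real.sqrt (M - y ^ 2))
      (1 / (2 * w) * (-(2 * x))) x :=
    (Real.hasDerivAt_sqrt hMx.ne').comp x Hq
  have HD : HasDerivAt (fun y : ℝ => 2 * c * Real.sqrt (M - y ^ 2))
      (2 * c * (1 / (2 * w) * (-(2 * x)))) x := Hw.const_mul (2 * c)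
  have HN : HasDerivAt (fun y : ℝ => (M - 2) * y) ((M - 2) * 1) x :=
    (hasDerivAt_id x).const_mul (M - 2)
  have hD0 : 2 * c * w ≠ 0 := by positivity
  have Hv : HasDerivAt (fun y : ℝ => (M - 2) * y / (2 * c * Real.sqrt (M - y ^ 2)))
      (((M - 2) * 1 * (2 * c * w) - (M - 2) * x * (2 * c * (1 / (2 * w) * (-(2 * x)))))
        / (2 * c * w) ^ 2) x := HN.div HD hD0
  set v := (M - 2) * x / (2 * c * w) with hv_def
  have hcw : (c * w) ^ 2 = (M - 1) * (M - x ^ 2) := by rw [mul_pow, hc2, hw2]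
  have hv2 : v ^ 2 < 1 := by
    rw [hv_def, div_pow, div_lt_one (by positivity)]
    nlinarith [hcw, mul_pos hM0 (by linarith : (0:ℝ) < 4 * (M - 1) - x ^ 2 * M)]
  have hv₁ : v ≠ -1 := by intro h; rw [h] at hv2; norm_num at hv2
  have hv₂ : v ≠ 1 := by intro h; rw [h] at hv2; norm_num at hv2
  have H2 : HasDerivAt
      (fun y : ℝ => Real.arcsin ((M - 2) * y / (2 * c * Real.sqrt (M - y ^ 2))))
      (1 / Real.sqrt (1 - v ^ 2) *
        (((M - 2) * 1 * (2 * c * w) - (M - 2) * x * (2 * c * (1 / (2 * w) * (-(2 * x)))))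
          / (2 * c * w) ^ 2)) x :=
    by have := (Real.hasDerivAt_arcsin hv₁ hv₂).comp x Hv; exact this
  have HG : HasDerivAt (kmG M)
      (M / (2 * Real.pi) * (1 / Real.sqrt (1 - (x / a) ^ 2) * (1 / a))
        - (M - 2) / (2 * Real.pi) *
          (1 / Real.sqrt (1 - v ^ 2) *
            (((M - 2) * 1 * (2 * c * w) - (M - 2) * x * (2 * c * (1 / (2 * w) * (-(2 * x)))))
              / (2 * c * w) ^ 2))) x :=
    (H1.const_mul (M / (2 * Real.pi))).sub (H2.const_mul ((M - 2) / (2 * Real.pi)))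
  convert HG using 1
  -- now the algebra
  have HA : Real.sqrt (1 - (x / a) ^ 2) = s / a := by
    have h1 : 1 - (x / a) ^ 2 = (4 * (M - 1) / M - x ^ 2) / a ^ 2 := by
      rw [div_pow, sub_div, ← ha2, div_self (pow_pos ha 2).ne']
    rw [h1, Real.sqrt_div ht.le, ← hs_def, Real.sqrt_sq ha.le]
  have HB : Real.sqrt (1 - v ^ 2) = M * s / (2 * c * w) := by
    have h2 : 1 - v ^ 2 = (M * s / (2 * c * w)) ^ 2 := by
      rw [hv_def]
      field_simp
      linear_combination 4 * hcw - M * hs2'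
    rw [h2, Real.sqrt_sq (by positivity)]
  rw [HA, HB, kmF]
  have h1mx : 1 - x ^ 2 / M = (M - x ^ 2) / M := by field_simp
  rw [h1mx, ← hs_def]
  field_simp
  linear_combination (M * w ^ 2) * hs2' + (-x ^ 2 * (M - 2) ^ 2) * hw2

lemma kmG_contOn {M : ℝ} (hM : 2 ≤ M) :
    ContinuousOn (kmG M)
      (Set.Icc (-(2 * Real.sqrt (1 - 1 / M))) (2 * Real.sqrt (1 - 1 / M))) := by
  have hM0 : (0:ℝ) < M := by linarith
  have hcont1 : Continuous fun y : ℝ =>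
      M / (2 * Real.pi) * Real.arcsin (y / (2 * Real.sqrt (1 - 1 / M))) := by
    exact continuous_const.mul (Real.continuous_arcsin.comp (continuous_id.div_const _))
  rcases eq_or_lt_of_le hM with h2 | h2
  · have hG : kmG M = fun y : ℝ =>
        M / (2 * Real.pi) * Real.arcsin (y / (2 * Real.sqrt (1 - 1 / M))) := by
      funext y
      simp [kmG, ← h2]
    rw [hG]
    exact hcont1.continuousOn
  · set a := 2 * Real.sqrt (1 - 1 / M) with ha_def
    have ha2 : a ^ 2 = 4 * (M - 1) / M := kmA_sq hM
    have haM : a ^ 2 < M := by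
      rw [ha2, div_lt_iff₀ hM0]
      nlinarith [sq_nonneg (M - 2)]
    apply ContinuousOn.sub hcont1.continuousOn
    apply ContinuousOn.mul continuousOn_const
    apply Real.continuous_arcsin.comp_continuousOn
    apply ContinuousOn.div
    · exact (continuous_const.mul continuous_id).continuousOn
    · exact (continuous_const.mul
        (Real.continuous_sqrt.comp (continuous_const.sub (continuous_pow 2)))).continuousOn
    · intro y hy
      have hy2 : y ^ 2 ≤ a ^ 2 := sq_le_sq' hy.1 hy.2
      have : 0 < M - y ^ 2 := by linarith
      have hc0 : 0 < Real.sqrt (M - 1) := Real.sqrt_pos.mpr (by linarith)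
      have hw0 : 0 < Real.sqrt (M - y ^ 2) := Real.sqrt_pos.mpr this
      positivity

lemma kmG_odd {M : ℝ} (x : ℝ) : kmG M (-x) = -kmG M x := by
  simp only [kmG, neg_sq, neg_div, mul_neg, Real.arcsin_neg, mul_neg]
  ring

lemma kmG_at_a {M : ℝ} (hM : 2 ≤ M) :
    kmG M (2 * Real.sqrt (1 - 1 / M)) = 1 / 2 := by
  have hM0 : (0:ℝ) < M := by linarith
  have hpi := Real.pi_pos
  set a := 2 * Real.sqrt (1 - 1 / M) with ha_def
  have ha : 0 < a := kmA_pos hM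
  have ha2 : a ^ 2 = 4 * (M - 1) / M := kmA_sq hM
  have h1 : a / a = 1 := div_self ha.ne'
  have key : (M - 2) / (2 * Real.pi) *
      Real.arcsin ((M - 2) * a / (2 * Real.sqrt (M - 1) * Real.sqrt (M - a ^ 2)))
      = (M - 2) / 4 := by
    rcases eq_or_lt_of_le hM with h2 | h2
    · rw [← h2]; norm_num
    · have hMa : M - a ^ 2 = (M - 2) ^ 2 / M := by
        rw [ha2]; field_simp; ring
      have hsq : Real.sqrt (M - a ^ 2) = (M - 2) / Real.sqrt M := by
        rw [hMa, Real.sqrt_div (sq_nonneg _), Real.sqrt_sq (by linarith)]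
      have haM : a * Real.sqrt M = 2 * Real.sqrt (M - 1) := by
        rw [ha_def, mul_assoc, ← Real.sqrt_mul (by
          rw [sub_nonneg, div_le_one hM0]; linarith : (0:ℝ) ≤ 1 - 1 / M)]
        congr 1
        field_simp
      have hc0 : 0 < Real.sqrt (M - 1) := Real.sqrt_pos.mpr (by linarith)
      have hM0' : 0 < Real.sqrt M := Real.sqrt_pos.mpr hM0
      have hden : 2 * Real.sqrt (M - 1) * ((M - 2) / Real.sqrt M) ≠ 0 := by
        apply ne_of_gt
        have h2' : (0:ℝ) < M - 2 := by linarith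
        positivity
      have hinner : (M - 2) * a / (2 * Real.sqrt (M - 1) * Real.sqrt (M - a ^ 2)) = 1 := by
        rw [hsq, div_eq_one_iff_eq hden]
        field_simp
        rw [ha_def] at haM
        linear_combination haM
      rw [hinner, Real.arcsin_one]
      field_simp
      ring
  rw [kmG, h1, Real.arcsin_one, key]
  field_simp
  ring

lemma kmF_nonneg {M : ℝ} (hM : 2 ≤ M) {x : ℝ} (hx : x ^ 2 ≤ M) : 0 ≤ kmF M x := by
  have hM0 : (0:ℝ) < M := by linarith
  have hpi := Real.pi_pos
  apply div_nonneg (Real.sqrt_nonneg _)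
  have : x ^ 2 / M ≤ 1 := by rw [div_le_one hM0]; exact hx
  nlinarith

lemma kmF_integral {M : ℝ} (hM : 2 ≤ M) :
    ∫ x in (-(2 * Real.sqrt (1 - 1 / M)))..(2 * Real.sqrt (1 - 1 / M)), kmF M x = 1 := by
  set a := 2 * Real.sqrt (1 - 1 / M) with ha_def
  have ha : 0 < a := kmA_pos hM
  have hle : -a ≤ a := by linarith
  have hnonneg : ∀ x ∈ Set.Ioo (-a) a, 0 ≤ kmF M x := by
    intro x hx
    apply kmF_nonneg hM
    have hxa : x ^ 2 < a ^ 2 := sq_lt_sq' hx.1 hx.2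
    have := kmA_sq_le hM
    rw [← ha_def] at this
    linarith
  have hderiv : ∀ x ∈ Set.Ioo (-a) a, HasDerivAt (kmG M) (kmF M x) x :=
    fun x hx => kmG_hasDeriv hM hx
  have hcont : ContinuousOn (kmG M) (Set.Icc (-a) a) := kmG_contOn hM
  have hint : IntervalIntegrable (kmF M) volume (-a) a := by
    apply intervalIntegrable_deriv_of_nonneg
    · rwa [Set.uIcc_of_le hle]
    · rwa [min_eq_left hle, max_eq_right hle]
    · rwa [min_eq_left hle, max_eq_right hle]
  rw [integral_eq_sub_of_hasDerivAt_of_le hle hcont hderiv hint]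
  rw [kmG_at_a hM, kmG_odd, kmG_at_a hM]
  norm_num

/-- For `m ≥ 2`, the Kesten–McKay density is a probability density: it is nonnegative
and integrates to `1`. -/
theorem kestenMcKay_isProbabilityDensity (m : ℕ) (hm : 2 ≤ m) :
    (∀ x, 0 ≤ kestenMcKay m x) ∧ ∫ x : ℝ, kestenMcKay m x = 1 := by
  have hM : (2:ℝ) ≤ (m:ℝ) := by exact_mod_cast hm
  have hM0 : (0:ℝ) < (m:ℝ) := by linarith
  set a := 2 * Real.sqrt (1 - 1 / (m:ℝ)) with ha_def
  have hind : kestenMcKay m = (Set.Icc (-a) a).indicator (kmF (m:ℝ)) := by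
    funext x
    rw [Set.indicator_apply]
    simp only [Set.mem_Icc, ← abs_le]
    rfl
  constructor
  · intro x
    rw [kestenMcKay]
    split_ifs with h
    · have hx2 : x ^ 2 ≤ a ^ 2 := by
        rw [← sq_abs]
        apply sq_le_sq' <;> [linarith [abs_nonneg x, neg_abs_le x]; exact h]
      have haM := kmA_sq_le hM
      rw [← ha_def] at haM
      exact kmF_nonneg hM (by linarith)
    · exact le_refl 0
  · rw [hind, MeasureTheory.integral_indicator measurableSet_Icc,
      MeasureTheory.integral_Icc_eq_integral_Ioc,
      ← intervalIntegral.integral_of_le (by linarith [kmA_pos hM] : -a ≤ a)]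
    exact kmF_integral hM
end
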